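/- There exists a constant c_n > 0, depending only on n, such that for every continuously differentiable function v : ℝⁿ → ℂ which vanishes on the boundary ∂K of the cube K = [0,π]ⁿ, one has (∫_K |v(x)|²·|∇(|v|²)(x)|² π^{−n}dx)^{1/2} ≥ c_n·(∫_K |v(x)|² π^{−n}dx)^{3/2}. -/

import Mathlib

open MeasureTheory

noncomputable section

/-- The cube `K = [0, π]ⁿ ⊂ ℝⁿ`. -/
def cubeK (n : ℕ) : Set (Fin n → ℝ) := Set.Icc 0 (fun _ => Real.pi)

lemma hasDerivAt_mul_sqrt {u : ℝ → ℝ} {u' t : ℝ} (hu : HasDerivAt u u' t)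
    (hnn : ∀ s, 0 ≤ u s) :
    HasDerivAt (fun s => u s * Real.sqrt (u s)) (3 / 2 * Real.sqrt (u t) * u') t := by
  rcases eq_or_lt_of_le (hnn t) with h0 | hpos
  · have hmin : IsLocalMin u t := Filter.Eventually.of_forall fun s => h0 ▸ hnn s
    have hu0 : u' = 0 := hmin.hasDerivAt_eq_zero hu
    subst hu0
    rw [hasDerivAt_iff_tendsto_slope]
    have h1 : Filter.Tendsto (slope u t) (nhdsWithin t {t}ᶜ) (nhds 0) :=
      hasDerivAt_iff_tendsto_slope.1 hu
    have h2 : Filter.Tendsto (fun s => Real.sqrt (u s)) (nhdsWithin t {t}ᶜ) (nhds 0) := by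
      have : Filter.Tendsto (fun s => Real.sqrt (u s)) (nhds t) (nhds (Real.sqrt (u t))) :=
        (Real.continuous_sqrt.continuousAt.comp hu.continuousAt)
      rw [← h0, Real.sqrt_zero] at this
      exact this.mono_left nhdsWithin_le_nhds
    have := h1.mul h2
    rw [mul_zero] at this
    have hgoal : (3 / 2 * Real.sqrt (u t) * 0) = 0 := by ring
    rw [hgoal]
    refine this.congr' ?_
    filter_upwards [self_mem_nhdsWithin] with s hs
    have hst : s - t ≠ 0 := sub_ne_zero.2 hs
    simp only [slope_def_field]
    rw [← h0]
    field_simp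
    simp
  · have hsq : HasDerivAt (fun s => Real.sqrt (u s)) (1 / (2 * Real.sqrt (u t)) * u') t :=
      (Real.hasDerivAt_sqrt (ne_of_gt hpos)).comp t hu
    have h := hu.mul hsq
    refine HasDerivAt.congr_deriv h ?_
    set a := Real.sqrt (u t) with ha
    have hs : a ≠ 0 := by positivity
    have hut : u t = a ^ 2 := (Real.sq_sqrt (hnn t)).symm
    rw [hut]
    field_simp
    ring

namespace Stmt1Aux

variable {m : ℕ}

abbrev eqv (m : ℕ) := MeasurableEquiv.piFinSuccAbove (fun _ : Fin (m+1) => ℝ) 0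

lemma eqv_symm_apply (t : ℝ) (y : Fin m → ℝ) :
    (eqv m).symm (t, y) = Fin.insertNth 0 t y := by
  rw [MeasurableEquiv.piFinSuccAbove_symm_apply]
  rfl

lemma cube_preimage (m : ℕ) :
    (⇑(eqv m)) ⁻¹' (Set.Icc (0:ℝ) Real.pi ×ˢ Set.Icc (0 : Fin m → ℝ) (fun _ => Real.pi)) =
      cubeK (m+1) := by
  ext x
  simp only [Set.mem_preimage, Set.mem_prod, Set.mem_Icc, cubeK, Pi.le_def,
    MeasurableEquiv.piFinSuccAbove_apply]
  have hx : (Fin.insertNthEquiv (fun _ : Fin (m+1) => ℝ) 0).symm x =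
      (x 0, fun j => x (Fin.succAbove 0 j)) := rfl
  rw [hx]
  constructor
  · rintro ⟨⟨h1, h2⟩, h3, h4⟩
    constructor
    · intro i
      rcases Fin.eq_zero_or_eq_succ i with rfl | ⟨j, rfl⟩
      · exact h1
      · simpa using h3 j
    · intro i
      rcases Fin.eq_zero_or_eq_succ i with rfl | ⟨j, rfl⟩
      · exact h2
      · simpa using h4 j
  · rintro ⟨h1, h2⟩
    exact ⟨⟨h1 0, h2 0⟩, fun j => h1 _, fun j => h2 _⟩

lemma update_insertNth (s t : ℝ) (y : Fin m → ℝ) :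
    Function.update (Fin.insertNth (α := fun _ => ℝ) (0 : Fin (m+1)) s y) 0 t =
      Fin.insertNth (α := fun _ => ℝ) 0 t y := by
  funext i
  rcases Fin.eq_zero_or_eq_succ i with rfl | ⟨j, rfl⟩
  · rw [Function.update_self, Fin.insertNth_apply_same]
  · rw [Function.update_of_ne (Fin.succ_ne_zero j)]
    have : Fin.succ j = Fin.succAbove 0 j := by simp [Fin.succAbove_zero]
    rw [this, Fin.insertNth_apply_succAbove, Fin.insertNth_apply_succAbove]

lemma mem_cube_insertNth {t : ℝ} {y : Fin m → ℝ}
    (ht : t ∈ Set.Icc (0:ℝ) Real.pi)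
    (hy : y ∈ Set.Icc (0 : Fin m → ℝ) (fun _ => Real.pi)) :
    Fin.insertNth (α := fun _ => ℝ) (0 : Fin (m+1)) t y ∈ cubeK (m+1) := by
  rw [← cube_preimage m]
  have : (eqv m) (Fin.insertNth 0 t y) = (t, y) := by
    rw [← eqv_symm_apply, MeasurableEquiv.apply_symm_apply]
  simp only [Set.mem_preimage, this]
  exact ⟨ht, hy⟩

lemma measurePreserving_eqv (m : ℕ) :
    MeasurePreserving (⇑(eqv m)) volume (Measure.prod volume volume) := by
  have h := measurePreserving_piFinSuccAbove (fun _ : Fin (m+1) => (volume : Measure ℝ)) 0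
  have h1 : (volume : Measure (Fin (m+1) → ℝ)) = Measure.pi fun _ => volume := volume_pi
  have h2 : (volume : Measure (Fin m → ℝ)) = Measure.pi fun _ => volume := volume_pi
  rw [h1, h2]
  exact h

lemma eqv_symm_apply' (p : ℝ × (Fin m → ℝ)) :
    (eqv m).symm p = Fin.insertNth (α := fun _ => ℝ) 0 p.1 p.2 := by
  obtain ⟨t, y⟩ := p
  exact eqv_symm_apply t y

lemma setIntegral_cube (m : ℕ) (F : (Fin (m+1) → ℝ) → ℝ) :
    ∫ x in cubeK (m+1), F x =
      ∫ p in (Set.Icc (0:ℝ) Real.pi ×ˢ Set.Icc (0 : Fin m → ℝ) fun _ => Real.pi),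
        F ((eqv m).symm p) ∂(Measure.prod volume volume) := by
  rw [← (measurePreserving_eqv m).setIntegral_preimage_emb (eqv m).measurableEmbedding
    (fun p => F ((eqv m).symm p))
    (Set.Icc (0:ℝ) Real.pi ×ˢ Set.Icc (0 : Fin m → ℝ) fun _ => Real.pi)]
  rw [cube_preimage]
  simp only [MeasurableEquiv.symm_apply_apply]

lemma cube_slice_bound {m : ℕ} {G B : (Fin (m+1) → ℝ) → ℝ} (hG : Continuous G)
    (hB : Continuous B) {c : ℝ}
    (hbd : ∀ x ∈ cubeK (m+1), B x ≤
      c * ∫ t in Set.Ioc (0:ℝ) Real.pi, G (Function.update x 0 t)) :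
    ∫ x in cubeK (m+1), B x ≤ Real.pi * c * ∫ x in cubeK (m+1), G x := by
  set Q := Set.Icc (0:ℝ) Real.pi with hQ
  set Q' := Set.Icc (0 : Fin m → ℝ) (fun _ => Real.pi) with hQ'
  set G2 : ℝ × (Fin m → ℝ) → ℝ := fun p => G (Fin.insertNth (α := fun _ => ℝ) 0 p.1 p.2)
    with hG2def
  set B2 : ℝ × (Fin m → ℝ) → ℝ := fun p => B (Fin.insertNth (α := fun _ => ℝ) 0 p.1 p.2)
    with hB2def
  have hins : Continuous fun p : ℝ × (Fin m → ℝ) => Fin.insertNth (α := fun _ => ℝ) 0 p.1 p.2 :=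
    Continuous.finInsertNth (A := fun _ : Fin (m+1) => ℝ) 0 continuous_fst continuous_snd
  have hG2c : Continuous G2 := hG.comp hins
  have hB2c : Continuous B2 := hB.comp hins
  have hQcomp : IsCompact (Q ×ˢ Q') := isCompact_Icc.prod isCompact_Icc
  have hGi : IntegrableOn G2 (Q ×ˢ Q') volume :=
    ContinuousOn.integrableOn_compact hQcomp hG2c.continuousOn
  have hBi : IntegrableOn B2 (Q ×ˢ Q') volume :=
    ContinuousOn.integrableOn_compact hQcomp hB2c.continuousOn
  have hGi' : Integrable G2 ((volume.restrict Q).prod (volume.restrict Q')) := by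
    rw [Measure.prod_restrict, ← Measure.volume_eq_prod]; exact hGi
  have hBi' : Integrable B2 ((volume.restrict Q).prod (volume.restrict Q')) := by
    rw [Measure.prod_restrict, ← Measure.volume_eq_prod]; exact hBi
  have hGiIoc : Integrable G2 ((volume.restrict (Set.Ioc (0:ℝ) Real.pi)).prod
      (volume.restrict Q')) := by
    rw [Measure.prod_restrict, ← Measure.volume_eq_prod]
    exact hGi.mono_set (Set.prod_mono Set.Ioc_subset_Icc_self subset_rfl)
  -- express both integrals as iterated integrals
  have hKB : ∫ x in cubeK (m+1), B x = ∫ y in Q', ∫ t in Q, B2 (t, y) := by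
    rw [setIntegral_cube m B]
    simp only [eqv_symm_apply']
    rw [← Measure.prod_restrict, integral_prod _ hBi']
    exact integral_integral_swap hBi'
  have hKG : ∫ x in cubeK (m+1), G x = ∫ t in Q, ∫ y in Q', G2 (t, y) := by
    rw [setIntegral_cube m G]
    simp only [eqv_symm_apply']
    rw [← Measure.prod_restrict, integral_prod _ hGi']
  have hπ : ((volume Q).toReal : ℝ) = Real.pi := by
    rw [hQ, Real.volume_Icc, sub_zero, ENNReal.toReal_ofReal Real.pi_nonneg]
  have hΦi : Integrable (fun y => ∫ t in Set.Ioc (0:ℝ) Real.pi, G2 (t, y))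
      (volume.restrict Q') := hGiIoc.integral_prod_right
  have inner : ∀ y ∈ Q', ∫ t in Q, B2 (t, y) ≤
      Real.pi * (c * ∫ t in Set.Ioc (0:ℝ) Real.pi, G2 (t, y)) := by
    intro y hy
    have hb : ∀ t ∈ Q, B2 (t, y) ≤ c * ∫ s in Set.Ioc (0:ℝ) Real.pi, G2 (s, y) := by
      intro t ht
      have hmem := mem_cube_insertNth (m := m) ht hy
      have h2 := hbd _ hmem
      simp only [update_insertNth] at h2
      exact h2
    have h1 : IntegrableOn (fun t => B2 (t, y)) Q volume :=
      ContinuousOn.integrableOn_compact isCompact_Icc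
        (hB2c.comp (continuous_id.prodMk continuous_const)).continuousOn
    calc ∫ t in Q, B2 (t, y)
        ≤ ∫ _t in Q, (c * ∫ s in Set.Ioc (0:ℝ) Real.pi, G2 (s, y)) :=
          setIntegral_mono_on h1 (integrableOn_const (by
            rw [hQ, Real.volume_Icc]; exact ENNReal.ofReal_ne_top)) measurableSet_Icc hb
      _ = Real.pi * (c * ∫ s in Set.Ioc (0:ℝ) Real.pi, G2 (s, y)) := by
          rw [setIntegral_const, smul_eq_mul, measureReal_def, hπ]
  calc ∫ x in cubeK (m+1), B x = ∫ y in Q', ∫ t in Q, B2 (t, y) := hKB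
    _ ≤ ∫ y in Q', Real.pi * (c * ∫ t in Set.Ioc (0:ℝ) Real.pi, G2 (t, y)) :=
        setIntegral_mono_on hBi'.integral_prod_right
          ((hΦi.const_mul c).const_mul Real.pi) measurableSet_Icc inner
    _ = Real.pi * c * ∫ y in Q', ∫ t in Set.Ioc (0:ℝ) Real.pi, G2 (t, y) := by
        rw [integral_const_mul, integral_const_mul]; ring
    _ = Real.pi * c * ∫ t in Set.Ioc (0:ℝ) Real.pi, ∫ y in Q', G2 (t, y) := by
        have hswap := integral_integral_swap (f := fun y t => G2 (t, y))
          (show Integrable (Function.uncurry fun (y : Fin m → ℝ) (t : ℝ) => G2 (t, y))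
              ((volume.restrict Q').prod (volume.restrict (Set.Ioc (0:ℝ) Real.pi))) from
            hGiIoc.swap)
        rw [hswap]
    _ = Real.pi * c * ∫ x in cubeK (m+1), G x := by
        rw [hKG, integral_Icc_eq_integral_Ioc]

lemma memLp_of_bounded {α : Type*} [MeasurableSpace α] {μ : Measure α} {s : Set α}
    (hsm : MeasurableSet s) (hfin : μ s ≠ ⊤) {f : α → ℝ}
    (hf : AEStronglyMeasurable f (μ.restrict s)) {C : ℝ} (hC : ∀ t ∈ s, |f t| ≤ C)
    (p : ENNReal) : MemLp f p (μ.restrict s) := by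
  haveI : IsFiniteMeasure (μ.restrict s) :=
    ⟨by rw [Measure.restrict_apply_univ]; exact lt_top_iff_ne_top.2 hfin⟩
  exact MemLp.of_bound hf C
    ((ae_restrict_iff' hsm).2 (Filter.Eventually.of_forall
      (by simpa [Real.norm_eq_abs] using hC)))

/-- Cauchy–Schwarz style bound: `(∫_s |f|)^2 ≤ μ(s) ∫_s f^2` for continuous `f`
on a measurable set `s` of finite volume on which `f` is bounded. -/
lemma sq_setIntegral_le {s : Set ℝ} (hsm : MeasurableSet s) (hfin : volume s ≠ ⊤)
    {f : ℝ → ℝ} (hf : Continuous f) {C : ℝ} (hC : ∀ t ∈ s, |f t| ≤ C) :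
    (∫ t in s, |f t|) ^ 2 ≤ (volume s).toReal * ∫ t in s, f t ^ 2 := by
  have h2 : (2:ℝ).HolderConjugate 2 := by constructor <;> norm_num
  have hmem : MemLp (fun t => |f t|) (ENNReal.ofReal 2) (volume.restrict s) :=
    memLp_of_bounded hsm hfin (hf.abs.aestronglyMeasurable) (by simpa using hC) _
  have hone : MemLp (fun _ : ℝ => (1:ℝ)) (ENNReal.ofReal 2) (volume.restrict s) :=
    memLp_of_bounded hsm hfin aestronglyMeasurable_const (C := 1) (by norm_num) _
  have hhold := integral_mul_le_Lp_mul_Lq_of_nonneg h2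
    (Filter.Eventually.of_forall fun t => abs_nonneg (f t))
    (Filter.Eventually.of_forall fun _ => zero_le_one) hmem hone
  simp only [mul_one] at hhold
  have habs2 : ∀ t : ℝ, |f t| ^ (2:ℝ) = f t ^ 2 := by
    intro t
    rw [show ((2:ℝ)) = ((2:ℕ) : ℝ) by norm_num, Real.rpow_natCast, sq_abs]
  have hone2 : ∀ t : ℝ, (1:ℝ) ^ (2:ℝ) = (1:ℝ) := fun t => Real.one_rpow 2
  rw [show (fun t => |f t| ^ (2:ℝ)) = fun t => f t ^ 2 from funext habs2] at hhold
  rw [show (fun t : ℝ => (1:ℝ) ^ (2:ℝ)) = fun _ : ℝ => (1:ℝ) from funext hone2] at hhold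
  rw [setIntegral_const, smul_eq_mul, mul_one] at hhold
  have hI : 0 ≤ ∫ t in s, |f t| := integral_nonneg fun t => abs_nonneg _
  have hA : 0 ≤ ∫ t in s, f t ^ 2 := integral_nonneg fun t => sq_nonneg _
  have hT : 0 ≤ ((volume s).toReal : ℝ) := ENNReal.toReal_nonneg
  calc (∫ t in s, |f t|) ^ 2
      ≤ ((∫ t in s, f t ^ 2) ^ (1/(2:ℝ)) * ((volume s).toReal) ^ (1/(2:ℝ))) ^ 2 := by
        apply pow_le_pow_left₀ hI hhold
    _ = (volume s).toReal * ∫ t in s, f t ^ 2 := by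
        rw [← Real.sqrt_eq_rpow, ← Real.sqrt_eq_rpow, mul_pow,
          Real.sq_sqrt hA, Real.sq_sqrt hT]
        ring

lemma pointwise_bound {m : ℕ} {g : (Fin (m+1) → ℝ) → ℝ} (hg : ContDiff ℝ 1 g)
    (hnn : ∀ x, 0 ≤ g x) {x : Fin (m+1) → ℝ} (hx : x ∈ cubeK (m+1))
    (h0 : g (Function.update x 0 0) = 0) :
    g x ^ 3 ≤ 9/4 * Real.pi *
      ∫ t in Set.Ioc (0:ℝ) Real.pi,
        g (Function.update x 0 t) * (fderiv ℝ g (Function.update x 0 t)) (Pi.single 0 1) ^ 2 := by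
  have hx0 : 0 ≤ x 0 := hx.1 0
  have hx0' : x 0 ≤ Real.pi := hx.2 0
  -- the path along the first coordinate
  have heq : (fun s : ℝ => Function.update x 0 s) =
      fun s : ℝ => x + (s - x 0) • Pi.single (M := fun _ : Fin (m+1) => ℝ) 0 1 := by
    funext s i
    rcases eq_or_ne i 0 with rfl | hi
    · simp
    · simp [Function.update_of_ne hi, Pi.single_apply, hi]
  have hpath : ∀ t : ℝ, HasDerivAt (fun s : ℝ => Function.update x 0 s)
      (Pi.single (M := fun _ : Fin (m+1) => ℝ) 0 1) t := by
    intro t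
    rw [heq]
    have h1 : HasDerivAt (fun s : ℝ => s - x 0) 1 t := (hasDerivAt_id t).sub_const (x 0)
    have h2 := (h1.smul_const (Pi.single (M := fun _ : Fin (m+1) => ℝ) 0 1)).const_add x
    simpa using h2
  have hpc : Continuous (fun s : ℝ => Function.update x 0 s) := by
    rw [heq]; fun_prop
  set u : ℝ → ℝ := fun t => g (Function.update x 0 t) with hu_def
  set F : ℝ → ℝ := fun t => (fderiv ℝ g (Function.update x 0 t)) (Pi.single 0 1) with hF_def
  have hu : ∀ t : ℝ, HasDerivAt u (F t) t := by
    intro t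
    exact ((hg.differentiable one_ne_zero _).hasFDerivAt).comp_hasDerivAt t (hpath t)
  have huc : Continuous u := hg.continuous.comp hpc
  have hFc : Continuous F :=
    ((hg.continuous_fderiv one_ne_zero).comp hpc).clm_apply continuous_const
  set ψ : ℝ → ℝ := fun t => 3/2 * Real.sqrt (u t) * F t with hψ_def
  have hψc : Continuous ψ :=
    (continuous_const.mul (Real.continuous_sqrt.comp huc)).mul hFc
  have hderiv : ∀ t : ℝ, HasDerivAt (fun s => u s * Real.sqrt (u s)) (ψ t) t :=
    fun t => hasDerivAt_mul_sqrt (hu t) (fun s => hnn _)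
  have hFTC : ∫ t in (0:ℝ)..(x 0), ψ t = u (x 0) * Real.sqrt (u (x 0)) - u 0 * Real.sqrt (u 0) :=
    intervalIntegral.integral_eq_sub_of_hasDerivAt (fun t _ => hderiv t)
      (hψc.intervalIntegrable _ _)
  have hu0 : u 0 = 0 := h0
  have hux : u (x 0) = g x := by rw [hu_def]; simp [Function.update_eq_self]
  rw [hu0, hux, Real.sqrt_zero, mul_zero, sub_zero] at hFTC
  -- bound |∫ 0..x0 ψ| by ∫_{Ioc 0 π} |ψ|
  have habs : |∫ t in (0:ℝ)..(x 0), ψ t| ≤ ∫ t in Set.Ioc (0:ℝ) Real.pi, |ψ t| := by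
    rw [intervalIntegral.integral_of_le hx0]
    calc |∫ t in Set.Ioc (0:ℝ) (x 0), ψ t|
        ≤ ∫ t in Set.Ioc (0:ℝ) (x 0), |ψ t| := by
          simpa [Real.norm_eq_abs] using
            norm_integral_le_integral_norm (μ := volume.restrict (Set.Ioc (0:ℝ) (x 0))) ψ
      _ ≤ ∫ t in Set.Ioc (0:ℝ) Real.pi, |ψ t| := by
          refine setIntegral_mono_set ?_ ?_ ?_
          · exact (ContinuousOn.integrableOn_compact isCompact_Icc
              hψc.abs.continuousOn).mono_set Set.Ioc_subset_Icc_self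
          · exact Filter.Eventually.of_forall fun t => abs_nonneg _
          · exact Filter.Eventually.of_forall (Set.Ioc_subset_Ioc le_rfl hx0')
  -- Cauchy-Schwarz
  obtain ⟨C, hC⟩ := isCompact_Icc.exists_bound_of_continuousOn
    (hψc.continuousOn (s := Set.Icc (0:ℝ) Real.pi))
  have hCS := sq_setIntegral_le measurableSet_Ioc (by simp [Real.volume_Ioc]) hψc
    (C := C) (fun t ht => by
      simpa [Real.norm_eq_abs] using hC t (Set.Ioc_subset_Icc_self ht))
  have hψsq : ∀ t : ℝ, ψ t ^ 2 = 9/4 * (u t * F t ^ 2) := by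
    intro t
    rw [hψ_def]
    have : (3/2 * Real.sqrt (u t) * F t) ^ 2 = (3/2)^2 * Real.sqrt (u t) ^ 2 * F t ^ 2 := by ring
    rw [this, Real.sq_sqrt (hnn _)]
    ring
  have hIoc : (volume (Set.Ioc (0:ℝ) Real.pi)).toReal = Real.pi := by
    rw [Real.volume_Ioc, sub_zero, ENNReal.toReal_ofReal Real.pi_nonneg]
  calc g x ^ 3 = (g x * Real.sqrt (g x)) ^ 2 := by
        rw [mul_pow, Real.sq_sqrt (hnn x)]; ring
    _ = (∫ t in (0:ℝ)..(x 0), ψ t) ^ 2 := by rw [hFTC]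
    _ ≤ (∫ t in Set.Ioc (0:ℝ) Real.pi, |ψ t|) ^ 2 := by
        rw [← sq_abs (∫ t in (0:ℝ)..(x 0), ψ t)]
        exact pow_le_pow_left₀ (abs_nonneg _) habs 2
    _ ≤ (volume (Set.Ioc (0:ℝ) Real.pi)).toReal * ∫ t in Set.Ioc (0:ℝ) Real.pi, ψ t ^ 2 := hCS
    _ = Real.pi * ∫ t in Set.Ioc (0:ℝ) Real.pi, 9/4 * (u t * F t ^ 2) := by
        rw [hIoc]
        congr 1
        exact integral_congr_ae (Filter.Eventually.of_forall fun t => hψsq t)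
    _ = 9/4 * Real.pi * ∫ t in Set.Ioc (0:ℝ) Real.pi,
          g (Function.update x 0 t) * (fderiv ℝ g (Function.update x 0 t)) (Pi.single 0 1) ^ 2 := by
        rw [integral_const_mul]
        ring

lemma update_mem_frontier {m : ℕ} {x : Fin (m+1) → ℝ} (hx : x ∈ cubeK (m+1)) :
    Function.update x 0 0 ∈ frontier (cubeK (m+1)) := by
  have hcl : IsClosed (cubeK (m+1)) := isClosed_Icc
  rw [hcl.frontier_eq]
  constructor
  · rw [cubeK, Set.mem_Icc]
    constructor
    · intro i
      rcases eq_or_ne i 0 with rfl | hi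
      · simp
      · simp only [Function.update_of_ne hi]
        exact hx.1 i
    · intro i
      rcases eq_or_ne i 0 with rfl | hi
      · simpa using Real.pi_nonneg
      · simp only [Function.update_of_ne hi]
        exact hx.2 i
  · intro hmem
    rw [cubeK, ← Set.pi_univ_Icc, interior_pi_set Set.finite_univ] at hmem
    have h0 := hmem 0 (Set.mem_univ 0)
    simp only [Function.update_self, Pi.zero_apply, interior_Icc, Set.mem_Ioo] at h0
    exact lt_irrefl 0 h0.1

end Stmt1Aux

open Stmt1Aux

/-- there is `c_n > 0` such that every `C¹` function `v : ℝⁿ → ℂ`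
vanishing on `∂K` satisfies
`(∫_K |v|² |∇(|v|²)|² π^{-n}dx)^{1/2} ≥ c_n (∫_K |v|² π^{-n}dx)^{3/2}`. -/
theorem stmt1 (n : ℕ) (hn : 1 ≤ n) :
    ∃ c : ℝ, 0 < c ∧
      ∀ v : (Fin n → ℝ) → ℂ, ContDiff ℝ 1 v →
        (∀ x ∈ frontier (cubeK n), v x = 0) →
        Real.sqrt ((Real.pi ^ n)⁻¹ * ∫ x in cubeK n,
            ‖v x‖ ^ 2 * ∑ j : Fin n,
              (fderiv ℝ (fun y => ‖v y‖ ^ 2) x (Pi.single j 1)) ^ 2) ≥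
          c * ((Real.pi ^ n)⁻¹ * ∫ x in cubeK n, ‖v x‖ ^ 2) ^ ((3 : ℝ) / 2) := by
  obtain ⟨m, rfl⟩ : ∃ m, n = m + 1 := ⟨n - 1, (Nat.succ_pred_eq_of_pos hn).symm⟩
  refine ⟨2 / (3 * Real.pi), by positivity, ?_⟩
  intro v hv hbdry
  set g : (Fin (m+1) → ℝ) → ℝ := fun x => ‖v x‖ ^ 2 with hgdef
  have hg : ContDiff ℝ 1 g := hv.norm_sq ℝ
  have hgc : Continuous g := hg.continuous
  have hnn : ∀ x, 0 ≤ g x := fun x => sq_nonneg _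
  have hgK : IsCompact (cubeK (m+1)) := isCompact_Icc
  have hKm : MeasurableSet (cubeK (m+1)) := measurableSet_Icc
  set F : Fin (m+1) → (Fin (m+1) → ℝ) → ℝ := fun j x => (fderiv ℝ g x) (Pi.single j 1)
    with hFdef
  have hFc : ∀ j, Continuous (F j) :=
    fun j => (hg.continuous_fderiv one_ne_zero).clm_apply continuous_const
  set T := Real.pi ^ (m+1) with hTdef
  have hTpos : 0 < T := pow_pos Real.pi_pos _
  have hvol : (volume (cubeK (m+1))).toReal = T := by
    have h := Real.volume_Icc_pi_toReal (a := (0 : Fin (m+1) → ℝ))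
      (b := fun _ => Real.pi) (fun i => Real.pi_nonneg)
    rw [cubeK]
    simpa [Finset.prod_const] using h
  have hvolne : volume (cubeK (m+1)) ≠ ⊤ := hgK.measure_lt_top.ne
  set G : (Fin (m+1) → ℝ) → ℝ := fun x => g x * F 0 x ^ 2 with hGdef
  have hGc : Continuous G := hgc.mul ((hFc 0).pow 2)
  have hBc : Continuous (fun x : Fin (m+1) → ℝ => g x ^ 3) := hgc.pow 3
  have hbd : ∀ x ∈ cubeK (m+1), g x ^ 3 ≤
      (9/4 * Real.pi) * ∫ t in Set.Ioc (0:ℝ) Real.pi, G (Function.update x 0 t) := by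
    intro x hx
    have h0mem : Function.update x 0 0 ∈ frontier (cubeK (m+1)) := update_mem_frontier hx
    have h0 : g (Function.update x 0 0) = 0 := by
      rw [hgdef]; simp [hbdry _ h0mem]
    exact pointwise_bound hg hnn hx h0
  have hslice : ∫ x in cubeK (m+1), g x ^ 3 ≤
      Real.pi * (9/4 * Real.pi) * ∫ x in cubeK (m+1), G x :=
    cube_slice_bound hGc hBc hbd
  set S := ∫ x in cubeK (m+1), g x * ∑ j, F j x ^ 2 with hSdef
  have hSGc : Continuous fun x : Fin (m+1) → ℝ => g x * ∑ j, F j x ^ 2 :=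
    hgc.mul (continuous_finset_sum _ fun j _ => (hFc j).pow 2)
  have hGS : ∫ x in cubeK (m+1), G x ≤ S :=
    setIntegral_mono_on (ContinuousOn.integrableOn_compact hgK hGc.continuousOn)
      (ContinuousOn.integrableOn_compact hgK hSGc.continuousOn) hKm
      (fun x _ => by
        have h := Finset.single_le_sum (f := fun j => F j x ^ 2)
          (fun j _ => sq_nonneg _) (Finset.mem_univ (0 : Fin (m+1)))
        calc G x = g x * F 0 x ^ 2 := rfl
          _ ≤ g x * ∑ j, F j x ^ 2 := mul_le_mul_of_nonneg_left h (hnn x))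
  set A := ∫ x in cubeK (m+1), g x with hAdef
  set Bq := ∫ x in cubeK (m+1), g x ^ 3 with hBqdef
  have hA0 : 0 ≤ A := setIntegral_nonneg hKm fun x _ => hnn x
  have hB0 : 0 ≤ Bq := setIntegral_nonneg hKm fun x _ => pow_nonneg (hnn x) 3
  have hS0 : 0 ≤ S := setIntegral_nonneg hKm fun x _ =>
    mul_nonneg (hnn x) (Finset.sum_nonneg fun j _ => sq_nonneg _)
  -- Hölder: A ^ 3 ≤ Bq * T ^ 2
  have hAB : A ^ 3 ≤ Bq * T ^ 2 := by
    have h3 : (3:ℝ).HolderConjugate (3/2) := by constructor <;> norm_num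
    obtain ⟨C, hC⟩ := hgK.exists_bound_of_continuousOn hgc.continuousOn
    have hmg : MemLp g (ENNReal.ofReal 3) (volume.restrict (cubeK (m+1))) :=
      memLp_of_bounded hKm hvolne hgc.aestronglyMeasurable
        (C := C) (fun x hx => by simpa [Real.norm_eq_abs] using hC x hx) _
    have hm1 : MemLp (fun _ : Fin (m+1) → ℝ => (1:ℝ)) (ENNReal.ofReal (3/2))
        (volume.restrict (cubeK (m+1))) :=
      memLp_of_bounded hKm hvolne aestronglyMeasurable_const (C := 1) (by norm_num) _
    have hhold := integral_mul_le_Lp_mul_Lq_of_nonneg h3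
      (Filter.Eventually.of_forall hnn)
      (Filter.Eventually.of_forall fun _ => zero_le_one) hmg hm1
    simp only [mul_one, Real.one_rpow] at hhold
    have hr3 : (fun x => g x ^ (3:ℝ)) = fun x => g x ^ 3 := by
      funext x
      rw [show (3:ℝ) = ((3:ℕ) : ℝ) by norm_num, Real.rpow_natCast]
    rw [hr3] at hhold
    rw [setIntegral_const, smul_eq_mul, mul_one, measureReal_def, hvol] at hhold
    -- hhold : A ≤ Bq ^ (1/3) * T ^ (1/(3/2))
    have hhold3 := pow_le_pow_left₀ hA0 hhold 3
    calc A ^ 3 ≤ (Bq ^ (1/(3:ℝ)) * T ^ (1/(3/2:ℝ))) ^ 3 := hhold3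
      _ = Bq * T ^ 2 := by
          rw [mul_pow, ← Real.rpow_natCast (Bq ^ (1/(3:ℝ))) 3,
            ← Real.rpow_natCast (T ^ (1/(3/2:ℝ))) 3,
            ← Real.rpow_mul hB0, ← Real.rpow_mul hTpos.le]
          norm_num
  have hBS : Bq ≤ 9/4 * Real.pi ^ 2 * S := by
    have hπ := Real.pi_pos
    nlinarith [hslice, hGS]
  -- final computation
  show Real.sqrt (T⁻¹ * S) ≥ 2 / (3 * Real.pi) * (T⁻¹ * A) ^ ((3:ℝ)/2)
  set a := T⁻¹ * A with hadef
  have ha0 : 0 ≤ a := mul_nonneg (inv_nonneg.2 hTpos.le) hA0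
  have hkey : (4 / (9 * Real.pi ^ 2)) * a ^ 3 ≤ T⁻¹ * S := by
    have hπ := Real.pi_pos
    have h1 : A ^ 3 ≤ 9/4 * Real.pi ^ 2 * S * T ^ 2 := by nlinarith [sq_nonneg T]
    have h2 : a ^ 3 = A ^ 3 * (T⁻¹) ^ 3 := by rw [hadef]; ring
    have h3 : A ^ 3 * (T⁻¹) ^ 3 ≤ (9/4 * Real.pi ^ 2 * S * T ^ 2) * (T⁻¹) ^ 3 :=
      mul_le_mul_of_nonneg_right h1 (pow_nonneg (inv_nonneg.2 hTpos.le) 3)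
    rw [h2]
    have h5 : (4 / (9 * Real.pi ^ 2)) * (A ^ 3 * (T⁻¹) ^ 3) ≤
        (4 / (9 * Real.pi ^ 2)) * ((9/4 * Real.pi ^ 2 * S * T ^ 2) * (T⁻¹) ^ 3) :=
      mul_le_mul_of_nonneg_left h3 (by positivity)
    refine h5.trans (le_of_eq ?_)
    have hTne : T ≠ 0 := hTpos.ne'
    field_simp
  have hrw : a ^ ((3:ℝ)/2) = Real.sqrt (a ^ 3) := by
    rw [Real.sqrt_eq_rpow, ← Real.rpow_natCast a 3, ← Real.rpow_mul ha0]
    norm_num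
  rw [hrw, ge_iff_le]
  calc 2 / (3 * Real.pi) * Real.sqrt (a ^ 3)
      = Real.sqrt ((4 / (9 * Real.pi ^ 2)) * a ^ 3) := by
        rw [Real.sqrt_mul (by positivity) (a ^ 3)]
        congr 1
        rw [show (4 / (9 * Real.pi ^ 2) : ℝ) = (2 / (3 * Real.pi)) ^ 2 by
          field_simp; ring]
        exact (Real.sqrt_sq (by positivity)).symm
    _ ≤ Real.sqrt (T⁻¹ * S) := Real.sqrt_le_sqrt hkey
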